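/- If Y is a connected graph on n vertices, then κ(Y) ≤ α(Y)/n, i.e., n·κ(Y) ≤ α(Y), where α(Y) is the number of acyclic orientations and κ(Y) is the number of click-equivalence classes. -/

import Mathlib

namespace AcycPaper

variable {V : Type*}

/-- `r` is an orientation of the graph `Y`: exactly one direction per edge. -/
def IsOrientation (Y : SimpleGraph V) (r : V → V → Prop) : Prop :=
  (∀ i j, Y.Adj i j ↔ (r i j ∨ r j i)) ∧ ∀ i j, r i j → ¬ r j i

/-- A relation is acyclic if it has no directed cycles. -/
def IsAcyclicRel (r : V → V → Prop) : Prop := ∀ v, ¬ Relation.TransGen r v v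

/-- The set of acyclic orientations of `Y`. -/
def Acyc (Y : SimpleGraph V) : Set (V → V → Prop) :=
  {r | IsOrientation Y r ∧ IsAcyclicRel r}

/-- `v` is a source: no edge points into `v`. -/
def IsSource (r : V → V → Prop) (v : V) : Prop := ∀ j, ¬ r j v

open Classical in
/-- Click (source-to-sink move) at `v`: reverse all edges incident to `v`. -/
def click (r : V → V → Prop) (v : V) : V → V → Prop :=
  fun i j => if v = i ∨ v = j then r j i else r i j

/-- One click step between acyclic orientations. -/
def ClickStep (Y : SimpleGraph V) (r r' : V → V → Prop) : Prop :=
  r ∈ Acyc Y ∧ ∃ v, IsSource r v ∧ r' = click r v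

/-- κ-equivalence: the equivalence relation generated by clicks. -/
def KEquiv (Y : SimpleGraph V) : (V → V → Prop) → (V → V → Prop) → Prop :=
  Relation.EqvGen (ClickStep Y)

/-- The set of κ-equivalence classes of acyclic orientations. -/
def KQuot (Y : SimpleGraph V) := Quot (fun a b : Acyc Y => ClickStep Y a.1 b.1)

/-- κ(Y): number of κ-equivalence classes. -/
noncomputable def kappa (Y : SimpleGraph V) : ℕ := Nat.card (KQuot Y)

/-- α(Y): number of acyclic orientations. -/
noncomputable def alpha (Y : SimpleGraph V) : ℕ := Nat.card (Acyc Y)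

/-! ### Auxiliary development -/

open Classical in
/-- Reverse all edges crossing the cut determined by `S`. -/
noncomputable def revSet (S : Set V) (r : V → V → Prop) : V → V → Prop :=
  fun i j => if (i ∈ S ↔ j ∈ S) then r i j else r j i

lemma revSet_empty (r : V → V → Prop) : revSet (∅ : Set V) r = r := by
  funext i j; simp [revSet]

lemma click_revSet (S : Set V) (r : V → V → Prop) {v : V} (hv : v ∉ S) :
    click (revSet S r) v = revSet (insert v S) r := by
  classical
  funext i j
  by_cases hi : v = i <;> by_cases hj : v = j <;>
    by_cases hiS : i ∈ S <;> by_cases hjS : j ∈ S <;>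
    simp_all [click, revSet, eq_comm]

lemma revSet_isOrientation {Y : SimpleGraph V} {r : V → V → Prop}
    (h : IsOrientation Y r) (S : Set V) : IsOrientation Y (revSet S r) := by
  classical
  constructor
  · intro i j
    rw [h.1 i j]
    by_cases hc : (i ∈ S ↔ j ∈ S)
    · simp only [revSet, if_pos hc, if_pos hc.symm]
    · have hc' : ¬ (j ∈ S ↔ i ∈ S) := fun h' => hc h'.symm
      simp only [revSet, if_neg hc, if_neg hc']
      exact or_comm
  · intro i j hij hji
    by_cases hc : (i ∈ S ↔ j ∈ S)
    · have hc' : (j ∈ S ↔ i ∈ S) := hc.symm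
      simp only [revSet, if_pos hc, if_pos hc'] at hij hji
      exact h.2 i j hij hji
    · have hc' : ¬ (j ∈ S ↔ i ∈ S) := fun h' => hc h'.symm
      simp only [revSet, if_neg hc, if_neg hc'] at hij hji
      exact h.2 j i hij hji

/-- Clicking a source of an acyclic relation keeps it acyclic. -/
lemma isAcyclicRel_click {r : V → V → Prop} {v : V}
    (hr : IsAcyclicRel r) (hv : IsSource r v) : IsAcyclicRel (click r v) := by
  classical
  have hout : ∀ j, ¬ click r v v j := by
    intro j hj
    simp only [click, if_pos (Or.inl rfl)] at hj
    exact hv j hj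
  have key : ∀ a b, Relation.TransGen (click r v) a b → a ≠ v →
      Relation.TransGen r a b ∨ b = v := by
    intro a b h ha
    induction h with
    | @single b' h' =>
      by_cases hb : b' = v
      · exact Or.inr hb
      · left
        refine Relation.TransGen.single ?_
        simpa [click, Ne.symm ha, Ne.symm hb] using h'
    | @tail b' c' hab hbc ih =>
      rcases ih with h1 | h1
      · by_cases hc : c' = v
        · exact Or.inr hc
        · have hb : b' ≠ v := by
            rintro rfl
            exact hout c' hbc
          left
          exact h1.tail (by simpa [click, Ne.symm hb, Ne.symm hc] using hbc)
      · subst h1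
        exact absurd hbc (hout c')
  intro w hw
  by_cases hwv : w = v
  · subst hwv
    obtain ⟨c, hc, -⟩ := Relation.TransGen.head'_iff.mp hw
    exact hout c hc
  · rcases key w w hw hwv with h | h
    · exact hr w h
    · exact hwv h

/-- An acyclic relation on a finite type has a minimal element in any nonempty set. -/
lemma exists_min_of_acyclic [Finite V] {r : V → V → Prop} (hr : IsAcyclicRel r)
    {S : Set V} (hS : S.Nonempty) :
    ∃ v ∈ S, ∀ x ∈ S, ¬ Relation.TransGen r x v := by
  haveI : IsTrans V (Relation.TransGen r) := ⟨fun _ _ _ => Relation.TransGen.trans⟩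
  haveI : IsIrrefl V (Relation.TransGen r) := ⟨hr⟩
  have wf := Finite.wellFounded_of_trans_of_irrefl (Relation.TransGen r)
  obtain ⟨m, hm, hmin⟩ := wf.has_min S hS
  exact ⟨m, hm, hmin⟩

open Classical in
/-- The increasing chain of clicked vertex sets, built from an acyclic orientation. -/
noncomputable def chainS (r : V → V → Prop) : ℕ → Set V
  | 0 => ∅
  | k+1 =>
      if h : ∃ v, v ∉ chainS r k ∧ ∀ x, x ∉ chainS r k → ¬ Relation.TransGen r x v
      then insert h.choose (chainS r k) else chainS r k

lemma chainS_zero (r : V → V → Prop) : chainS r 0 = ∅ := rfl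

open Classical in
lemma chainS_succ (r : V → V → Prop) (k : ℕ) :
    chainS r (k+1) =
      if h : ∃ v, v ∉ chainS r k ∧ ∀ x, x ∉ chainS r k → ¬ Relation.TransGen r x v
      then insert h.choose (chainS r k) else chainS r k := rfl

lemma chainS_subset_succ (r : V → V → Prop) (k : ℕ) : chainS r k ⊆ chainS r (k+1) := by
  rw [chainS_succ]
  split
  · exact Set.subset_insert _ _
  · exact subset_rfl

lemma chainS_mono (r : V → V → Prop) : ∀ {k l : ℕ}, k ≤ l → chainS r k ⊆ chainS r l := by
  intro k l h
  induction h with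
  | refl => exact subset_rfl
  | step _ ih => exact ih.trans (chainS_subset_succ r _)

/-- Lower-set invariant for the chain. -/
lemma chainS_lowerSet {r : V → V → Prop} :
    ∀ k, ∀ x y, r x y → y ∈ chainS r k → x ∈ chainS r k := by
  intro k
  induction k with
  | zero => intro x y _ hy; exact absurd hy (Set.notMem_empty y)
  | succ k ih =>
    intro x y hxy hy
    rw [chainS_succ] at hy ⊢
    by_cases hex : ∃ v, v ∉ chainS r k ∧ ∀ x, x ∉ chainS r k → ¬ Relation.TransGen r x v
    · rw [dif_pos hex] at hy ⊢
      rcases hy with hy | hy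
      · subst hy
        by_cases hx : x ∈ chainS r k
        · exact Set.mem_insert_of_mem _ hx
        · exact absurd (Relation.TransGen.single hxy) (hex.choose_spec.2 x hx)
      · exact Set.mem_insert_of_mem _ (ih x y hxy hy)
    · rw [dif_neg hex] at hy ⊢
      exact ih x y hxy hy

lemma chainS_ncard [Fintype V] {r : V → V → Prop} (hr : IsAcyclicRel r) :
    ∀ k, k ≤ Fintype.card V → (chainS r k).ncard = k := by
  intro k
  induction k with
  | zero => intro _; simp [chainS]
  | succ k ih =>
    intro hk
    have hk' : k < Fintype.card V := hk
    have hcard := ih (le_of_lt hk')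
    have hne : (chainS r k) ≠ Set.univ := by
      intro h
      rw [h, Set.ncard_univ, Nat.card_eq_fintype_card] at hcard
      omega
    have hcompl : (chainS r k)ᶜ.Nonempty := Set.nonempty_compl.mpr hne
    have hex : ∃ v, v ∉ chainS r k ∧ ∀ x, x ∉ chainS r k → ¬ Relation.TransGen r x v := by
      obtain ⟨v, hv, hmin⟩ := exists_min_of_acyclic hr hcompl
      exact ⟨v, hv, fun x hx => hmin x hx⟩
    rw [chainS_succ, dif_pos hex,
      Set.ncard_insert_of_notMem hex.choose_spec.1 (Set.toFinite _)]
    omega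

/-- If two cut-reversals of an orientation agree, the cuts agree on every edge. -/
lemma cut_eq_of_revSet_eq {Y : SimpleGraph V} {r : V → V → Prop}
    (hor : IsOrientation Y r) {S T : Set V}
    (h : revSet S r = revSet T r) {i j : V} (hadj : Y.Adj i j) :
    ((i ∈ S ↔ j ∈ S) ↔ (i ∈ T ↔ j ∈ T)) := by
  classical
  have hij := congrFun (congrFun h i) j
  by_cases hS : (i ∈ S ↔ j ∈ S) <;> by_cases hT : (i ∈ T ↔ j ∈ T)
  · tauto
  · exfalso
    simp only [revSet, if_pos hS, if_neg hT] at hij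
    rcases (hor.1 i j).mp hadj with hr | hr
    · exact hor.2 i j hr (hij ▸ hr)
    · exact hor.2 j i hr (hij ▸ hr)
  · exfalso
    simp only [revSet, if_neg hS, if_pos hT] at hij
    rcases (hor.1 i j).mp hadj with hr | hr
    · exact hor.2 i j hr (hij ▸ hr)
    · exact hor.2 j i hr (hij ▸ hr)
  · tauto

/-- Distinctness of cut-reversals: over a connected graph, proper distinct nested cuts
give distinct orientations. -/
lemma revSet_ne {Y : SimpleGraph V} (hY : Y.Connected) {r : V → V → Prop}
    (hor : IsOrientation Y r) {S T : Set V} (hST : S ⊆ T)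
    (hne : S ≠ T) (hT : T ≠ Set.univ) : revSet S r ≠ revSet T r := by
  classical
  intro h
  -- membership in W := {x | x ∈ S ↔ x ∈ T} is constant along edges
  have hW : ∀ i j, Y.Adj i j → ((i ∈ S ↔ i ∈ T) ↔ (j ∈ S ↔ j ∈ T)) := by
    intro i j hadj
    have := cut_eq_of_revSet_eq hor h hadj
    tauto
  obtain ⟨a, haT, haS⟩ : ∃ a, a ∈ T ∧ a ∉ S := by
    by_contra hcon
    push_neg at hcon
    exact hne (Set.Subset.antisymm hST hcon)
  obtain ⟨b, hb⟩ : ∃ b, b ∉ T := by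
    by_contra hcon
    push_neg at hcon
    exact hT (Set.eq_univ_of_forall hcon)
  have hreach : Y.Reachable a b := hY a b
  obtain ⟨p⟩ := hreach
  have hwalk : ∀ {u w : V} (_ : Y.Walk u w), ((u ∈ S ↔ u ∈ T) ↔ (w ∈ S ↔ w ∈ T)) := by
    intro u w p
    induction p with
    | nil => tauto
    | cons hadj _ ih => exact (hW _ _ hadj).trans ih
  have := hwalk p
  have hbS : b ∉ S := fun hbs => hb (hST hbs)
  tauto

section Chain

variable [Fintype V] {Y : SimpleGraph V} {r : V → V → Prop}

/-- All chain orientations are acyclic orientations, and consecutive ones are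
related by clicks (giving equal classes). -/
lemma chain_mem_and_quot (hr : r ∈ Acyc Y) :
    ∀ k, revSet (chainS r k) r ∈ Acyc Y ∧
      ∀ (h0 : revSet (chainS r 0) r ∈ Acyc Y)
        (hk : revSet (chainS r k) r ∈ Acyc Y),
        Quot.mk (fun a b : Acyc Y => ClickStep Y a.1 b.1) ⟨_, hk⟩ =
        Quot.mk (fun a b : Acyc Y => ClickStep Y a.1 b.1) ⟨_, h0⟩ := by
  classical
  intro k
  induction k with
  | zero =>
    refine ⟨?_, fun h0 hk => rfl⟩
    rw [chainS_zero, revSet_empty]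
    exact hr
  | succ k ih =>
    obtain ⟨hmem, hquot⟩ := ih
    by_cases hex : ∃ v, v ∉ chainS r k ∧ ∀ x, x ∉ chainS r k → ¬ Relation.TransGen r x v
    · set v := hex.choose with hv
      obtain ⟨hvnot, hvmin⟩ := hex.choose_spec
      have hchain : chainS r (k+1) = insert v (chainS r k) := by
        rw [chainS_succ, dif_pos hex]
      have hclick : revSet (chainS r (k+1)) r = click (revSet (chainS r k) r) v := by
        rw [hchain, ← click_revSet _ _ hvnot]
      have hsource : IsSource (revSet (chainS r k) r) v := by
        intro x hx
        by_cases hxS : x ∈ chainS r k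
        · have hc : ¬ (x ∈ chainS r k ↔ v ∈ chainS r k) := by tauto
          simp only [revSet, if_neg hc] at hx
          exact hvnot (chainS_lowerSet k v x hx hxS)
        · have hc : (x ∈ chainS r k ↔ v ∈ chainS r k) := by tauto
          simp only [revSet, if_pos hc] at hx
          exact hvmin x hxS (Relation.TransGen.single hx)
      have hstep : ClickStep Y (revSet (chainS r k) r) (revSet (chainS r (k+1)) r) :=
        ⟨hmem, v, hsource, hclick⟩
      have hmem' : revSet (chainS r (k+1)) r ∈ Acyc Y := by
        refine ⟨revSet_isOrientation hr.1 _, ?_⟩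
        rw [hclick]
        exact isAcyclicRel_click hmem.2 hsource
      refine ⟨hmem', fun h0 hk1 => ?_⟩
      have := Quot.sound (r := fun a b : Acyc Y => ClickStep Y a.1 b.1)
        (a := ⟨_, hmem⟩) (b := ⟨_, hk1⟩) hstep
      rw [← this]
      exact hquot h0 hmem
    · have hchain : chainS r (k+1) = chainS r k := (chainS_succ r k).trans (dif_neg hex)
      refine ⟨hchain ▸ hmem, fun h0 hk1 => ?_⟩
      have : (⟨revSet (chainS r (k+1)) r, hk1⟩ : Acyc Y) = ⟨revSet (chainS r k) r, hmem⟩ :=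
        Subtype.ext (congrArg (fun S => revSet S r) hchain)
      rw [this]
      exact hquot h0 hmem

end Chain

/-- for a connected graph Y on n vertices, n·κ(Y) ≤ α(Y). -/
theorem kappa_le_alpha_div_card {V : Type*} [Fintype V] (Y : SimpleGraph V)
    (hY : Y.Connected) :
    Fintype.card V * kappa Y ≤ alpha Y := by
  classical
  set n := Fintype.card V with hn
  haveI : Finite (Acyc Y) := Subtype.finite
  -- the injection
  have key : ∃ f : Fin n × KQuot Y → Acyc Y, Function.Injective f := by
    refine ⟨fun p => ?_, ?_⟩
    · exact
        let c := p.2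
        let rr := (Quot.out c : Acyc Y)
        ⟨revSet (chainS rr.1 p.1.1) rr.1, (chain_mem_and_quot rr.2 p.1.1).1⟩
    · rintro ⟨k, c⟩ ⟨k', c'⟩ hfe
      simp only at hfe
      -- classes agree
      have hclass : ∀ (c : KQuot Y) (k : Fin n),
          Quot.mk (fun a b : Acyc Y => ClickStep Y a.1 b.1)
            ⟨revSet (chainS (Quot.out c : Acyc Y).1 k.1) (Quot.out c : Acyc Y).1,
              (chain_mem_and_quot (Quot.out c : Acyc Y).2 k.1).1⟩ = c := by
        intro c k
        have h0 : revSet (chainS (Quot.out c : Acyc Y).1 0) (Quot.out c : Acyc Y).1 ∈ Acyc Y :=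
          (chain_mem_and_quot (Quot.out c : Acyc Y).2 0).1
        have := (chain_mem_and_quot (Quot.out c : Acyc Y).2 k.1).2 h0
          (chain_mem_and_quot (Quot.out c : Acyc Y).2 k.1).1
        rw [this]
        have : (⟨revSet (chainS (Quot.out c : Acyc Y).1 0) (Quot.out c : Acyc Y).1, h0⟩ :
            Acyc Y) = Quot.out c := Subtype.ext (by simp [chainS, revSet_empty])
        rw [this]; exact Quot.out_eq (r := fun a b : Acyc Y => ClickStep Y a.1 b.1) c
      have hcc : c = c' := by
        have h1 := hclass c k
        have h2 := hclass c' k'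
        rw [← h1, ← h2]
        exact congrArg _ hfe
      subst hcc
      have hrev : revSet (chainS (Quot.out c : Acyc Y).1 k.1) (Quot.out c : Acyc Y).1 =
          revSet (chainS (Quot.out c : Acyc Y).1 k'.1) (Quot.out c : Acyc Y).1 :=
        congrArg Subtype.val hfe
      have hkk : k = k' := by
        by_contra hne
        set rr := (Quot.out c : Acyc Y) with hrr
        have hacyc : IsAcyclicRel rr.1 := rr.2.2
        have hor : IsOrientation Y rr.1 := rr.2.1
        have hncard := chainS_ncard hacyc
        -- wlog k < k'
        rcases Nat.lt_or_ge k.1 k'.1 with hlt | hge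
        · have hsub : chainS rr.1 k.1 ⊆ chainS rr.1 k'.1 := chainS_mono _ (le_of_lt hlt)
          have hne' : chainS rr.1 k.1 ≠ chainS rr.1 k'.1 := by
            intro h
            have := hncard k.1 (le_of_lt k.2)
            rw [h, hncard k'.1 (le_of_lt k'.2)] at this
            omega
          have hTuniv : chainS rr.1 k'.1 ≠ Set.univ := by
            intro h
            have := hncard k'.1 (le_of_lt k'.2)
            rw [h, Set.ncard_univ, Nat.card_eq_fintype_card] at this
            have := k'.2
            omega
          exact revSet_ne hY hor hsub hne' hTuniv hrev
        · have hlt : k'.1 < k.1 := lt_of_le_of_ne hge (fun h => hne (Fin.ext h.symm))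
          have hsub : chainS rr.1 k'.1 ⊆ chainS rr.1 k.1 := chainS_mono _ (le_of_lt hlt)
          have hne' : chainS rr.1 k'.1 ≠ chainS rr.1 k.1 := by
            intro h
            have := hncard k'.1 (le_of_lt k'.2)
            rw [h, hncard k.1 (le_of_lt k.2)] at this
            omega
          have hTuniv : chainS rr.1 k.1 ≠ Set.univ := by
            intro h
            have := hncard k.1 (le_of_lt k.2)
            rw [h, Set.ncard_univ, Nat.card_eq_fintype_card] at this
            have := k.2
            omega
          exact revSet_ne hY hor hsub hne' hTuniv hrev.symm
      rw [hkk]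
  obtain ⟨f, hf⟩ := key
  have := Nat.card_le_card_of_injective f hf
  rwa [Nat.card_prod, Nat.card_eq_fintype_card (α := Fin n), Fintype.card_fin] at this

end AcycPaper
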